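/- In the setting of the 6×6 encoding matrices A^{(α)} = A(u_α, v_α) of a Post correspondence instance (u_α, v_α)_{α∈[d]} over an alphabet Σ of size b ≥ 1, let λ ∈ ℚ, let L = e₆ (the sixth standard basis vector of ℚ⁶) and R = e₁ − e₂ + e₃ − (λ+1)e₆. Then for every word w ∈ [d]*: ⟨L, A^{(w)} R⟩ = (σ(U(w)) − σ(V(w)))² − (λ+1). -/

import Mathlib

def numRep {S : Type*} (b : ℕ) (e : S ≃ Fin b) (w : List S) : ℕ :=
  ∑ j : Fin w.length, ((e (w.get j) : ℕ) + 1) * b ^ (w.length - 1 - (j : ℕ))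

/-- The 6×6 integer encoding matrix `A(u,v)` built from the numeric representation `σ`. -/
def encMat {S : Type*} (b : ℕ) (e : S ≃ Fin b) (u v : List S) :
    Matrix (Fin 6) (Fin 6) ℤ :=
  !![(b : ℤ) ^ (2 * u.length), 0, 0, 0, 0, 0;
     0, (b : ℤ) ^ (u.length + v.length), 0, 0, 0, 0;
     0, 0, (b : ℤ) ^ (2 * v.length), 0, 0, 0;
     (numRep b e u : ℤ) * (b : ℤ) ^ u.length, (numRep b e v : ℤ) * (b : ℤ) ^ u.length, 0,
       (b : ℤ) ^ u.length, 0, 0;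
     0, (numRep b e u : ℤ) * (b : ℤ) ^ v.length, (numRep b e v : ℤ) * (b : ℤ) ^ v.length, 0,
       (b : ℤ) ^ v.length, 0;
     (numRep b e u : ℤ) ^ 2, 2 * (numRep b e u : ℤ) * (numRep b e v : ℤ), (numRep b e v : ℤ) ^ 2,
       2 * (numRep b e u : ℤ), 2 * (numRep b e v : ℤ), 1]

/-- The boundary vector `L = e₆ ∈ ℚ⁶` (sixth standard basis vector). -/
def bndL : Fin 6 → ℚ := Pi.single 5 1

/-- The boundary vector `R = e₁ − e₂ + e₃ − (λ+1)e₆ ∈ ℚ⁶`. -/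
def bndR (lam : ℚ) : Fin 6 → ℚ :=
  (Pi.single 0 1 : Fin 6 → ℚ) - (Pi.single 1 1 : Fin 6 → ℚ)
    + (Pi.single 2 1 : Fin 6 → ℚ) - (lam + 1) • (Pi.single 5 1 : Fin 6 → ℚ)

lemma numRep_cons {S : Type*} (b : ℕ) (e : S ≃ Fin b) (a : S) (t : List S) :
    numRep b e (a :: t) = ((e a : ℕ) + 1) * b ^ t.length + numRep b e t := by
  unfold numRep
  show (∑ j : Fin (t.length + 1),
      ((e ((a :: t).get j) : ℕ) + 1) * b ^ (t.length + 1 - 1 - (j : ℕ))) = _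
  rw [Fin.sum_univ_succ]
  simp only [List.get_cons_zero, Fin.val_zero, Nat.add_sub_cancel, Nat.sub_zero]
  congr 1
  refine Finset.sum_congr rfl fun j _ => ?_
  congr 1
  congr 1
  simp only [Fin.val_succ]
  omega

lemma numRep_append {S : Type*} (b : ℕ) (e : S ≃ Fin b) (s t : List S) :
    numRep b e (s ++ t) = numRep b e s * b ^ t.length + numRep b e t := by
  induction s with
  | nil => simp [numRep]
  | cons a s ih =>
      rw [List.cons_append, numRep_cons, ih, numRep_cons]
      simp only [List.length_append, pow_add]
      ring

/-- The auxiliary row vector `r(x,y) = (x², 2xy, y², 2x, 2y, 1)`. -/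
def rowv (x y : ℚ) : Fin 6 → ℚ := ![x^2, 2*x*y, y^2, 2*x, 2*y, 1]

lemma cons5 {n : ℕ} {α : Type*} (a : α) (f : Fin (n+5) → α) : Matrix.vecCons a f 5 = f 4 := rfl
lemma cons4 {n : ℕ} {α : Type*} (a : α) (f : Fin (n+4) → α) : Matrix.vecCons a f 4 = f 3 := rfl
lemma cons3 {n : ℕ} {α : Type*} (a : α) (f : Fin (n+3) → α) : Matrix.vecCons a f 3 = f 2 := rfl
lemma cons2 {n : ℕ} {α : Type*} (a : α) (f : Fin (n+2) → α) : Matrix.vecCons a f 2 = f 1 := rfl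
lemma cons1 {n : ℕ} {α : Type*} (a : α) (f : Fin (n+1) → α) : Matrix.vecCons a f 1 = f 0 := rfl
lemma cons0 {n : ℕ} {α : Type*} (a : α) (f : Fin n → α) : Matrix.vecCons a f 0 = a := rfl

open Matrix in
lemma rowv_vecMul {S : Type*} (b : ℕ) (e : S ≃ Fin b) (u v : List S) (x y : ℚ) :
    rowv x y ᵥ* ((encMat b e u v).map (Int.cast : ℤ → ℚ))
      = rowv (x * (b:ℚ) ^ u.length + numRep b e u) (y * (b:ℚ) ^ v.length + numRep b e v) := by
  funext i
  fin_cases i <;>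
    simp [rowv, encMat, Matrix.vecMul, dotProduct, Fin.sum_univ_six,
      Matrix.map_apply, pow_add, two_mul, cons5, cons4, cons3, cons2, cons1, cons0] <;> ring

open Matrix in
lemma rowv_vecMul_word {S : Type*} (b d : ℕ) (e : S ≃ Fin b)
    (u v : Fin d → List S) (w : List (Fin d)) (x y : ℚ) :
    rowv x y ᵥ*
        ((w.map fun α => encMat b e (u α) (v α)).prod.map (Int.cast : ℤ → ℚ))
      = rowv (x * (b:ℚ) ^ ((w.map u).flatten).length + numRep b e ((w.map u).flatten))
          (y * (b:ℚ) ^ ((w.map v).flatten).length + numRep b e ((w.map v).flatten)) := by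
  induction w generalizing x y with
  | nil =>
      simp only [List.map_nil, List.flatten_nil]
      simp [numRep, Matrix.map_one (Int.cast : ℤ → ℚ), Finset.univ_eq_empty]
  | cons α w ih =>
      have hmap : (((encMat b e (u α) (v α)) *
            (w.map fun α => encMat b e (u α) (v α)).prod).map (Int.cast : ℤ → ℚ))
          = ((encMat b e (u α) (v α)).map (Int.cast : ℤ → ℚ)) *
            ((w.map fun α => encMat b e (u α) (v α)).prod.map (Int.cast : ℤ → ℚ)) :=
        Matrix.map_mul (f := Int.castRingHom ℚ)
      rw [List.map_cons, List.prod_cons, hmap, ← Matrix.vecMul_vecMul, rowv_vecMul, ih]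
      congr 1 <;>
      · simp only [List.map_cons, List.flatten_cons, List.length_append, numRep_append,
          pow_add]
        push_cast
        ring

open Matrix in
/-- With `L = e₆` and `R = e₁ − e₂ + e₃ − (λ+1)e₆` in `ℚ⁶`, for every word `w ∈ [d]*`:
`⟨L, A^{(w)} R⟩ = (σ(U(w)) − σ(V(w)))² − (λ+1)`. -/
theorem encMat_pairing {S : Type*} (b d : ℕ) (hb : 1 ≤ b) (e : S ≃ Fin b)
    (u v : Fin d → List S) (lam : ℚ) (w : List (Fin d)) :
    bndL ⬝ᵥ
        (((w.map fun α => encMat b e (u α) (v α)).prod.map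
            (Int.cast : ℤ → ℚ)).mulVec (bndR lam))
      = ((numRep b e ((w.map u).flatten) : ℚ) - (numRep b e ((w.map v).flatten) : ℚ)) ^ 2
          - (lam + 1) := by
  have hL : bndL = rowv 0 0 := by
    funext i
    fin_cases i <;> simp [bndL, rowv, Pi.single, Function.update, cons5, cons4, cons3,
      cons2, cons1, cons0]
  rw [Matrix.dotProduct_mulVec, hL, rowv_vecMul_word]
  simp only [zero_mul, zero_add]
  set X := (numRep b e ((w.map u).flatten) : ℚ)
  set Y := (numRep b e ((w.map v).flatten) : ℚ)
  show (rowv X Y) ⬝ᵥ bndR lam = (X - Y) ^ 2 - (lam + 1)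
  simp [rowv, bndR, dotProduct, Fin.sum_univ_six, Pi.single, Function.update,
    cons5, cons4, cons3, cons2, cons1, cons0]
  ring
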